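/- For d ≥ 3, the first blow-up condition ∫|x|² n₀ dx < K₁(d) M^{d/(d−2)} with K₁(d) = 2^{-d/(d−2)} (d|𝕊^{d−1}|)^{-2/(d−2)} implies ‖n₀‖_{L^{d/2}} > 8/(d C_S(d)²); i.e. the blow-up criterion is incompatible with the smallness condition ‖n₀‖_{L^{d/2}} < 8/(d C_S(d)²) for global existence. -/

import Mathlib

open MeasureTheory Real

set_option maxHeartbeats 1000000

lemma aux_log_convex_gamma (x : ℝ) (hx : 0 < x) :
    Real.Gamma (x + 1) ≤ Real.Gamma (x + 1/2) * Real.sqrt (x + 1/2) := by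
  have h1 : (0:ℝ) < x + 1/2 := by linarith
  have h2 : (0:ℝ) < x + 3/2 := by linarith
  have hG1 : 0 < Real.Gamma (x + 1/2) := Real.Gamma_pos_of_pos h1
  have hG2 : 0 < Real.Gamma (x + 3/2) := Real.Gamma_pos_of_pos h2
  have hG0 : 0 < Real.Gamma (x + 1) := Real.Gamma_pos_of_pos (by linarith)
  have hc := Real.convexOn_log_Gamma.2 (Set.mem_Ioi.mpr h1) (Set.mem_Ioi.mpr h2)
      (by norm_num : (0:ℝ) ≤ 1/2) (by norm_num : (0:ℝ) ≤ 1/2) (by norm_num)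
  have hmid : (1/2 : ℝ) • (x + 1/2) + (1/2 : ℝ) • (x + 3/2) = x + 1 := by
    simp [smul_eq_mul]; ring
  rw [hmid] at hc
  simp only [Function.comp_apply, smul_eq_mul] at hc
  -- hc : log (Gamma (x+1)) ≤ 1/2 * log (Gamma (x+1/2)) + 1/2 * log (Gamma (x+3/2))
  have hG2' : Real.Gamma (x + 3/2) = (x + 1/2) * Real.Gamma (x + 1/2) := by
    have := Real.Gamma_add_one (ne_of_gt h1)
    rw [show x + 3/2 = x + 1/2 + 1 by ring, this]
  have hrhs : 1/2 * Real.log (Real.Gamma (x+1/2)) + 1/2 * Real.log (Real.Gamma (x+3/2))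
      = Real.log (Real.Gamma (x + 1/2) * Real.sqrt (x + 1/2)) := by
    rw [hG2', Real.log_mul (ne_of_gt h1) (ne_of_gt hG1),
      Real.log_mul (ne_of_gt hG1) (ne_of_gt (Real.sqrt_pos.mpr h1)),
      Real.log_sqrt h1.le]
    ring
  rw [hrhs] at hc
  have hpos : 0 < Real.Gamma (x + 1/2) * Real.sqrt (x + 1/2) :=
    mul_pos hG1 (Real.sqrt_pos.mpr h1)
  exact (Real.log_le_log_iff hG0 hpos).mp hc

lemma aux_seven (d : ℕ) (hd : 3 ≤ d) : 7 * ((d:ℝ) + 1) ≤ 4 ^ d := by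
  induction d with
  | zero => omega
  | succ n ih =>
    rcases Nat.lt_or_ge n 3 with h | h
    · interval_cases n <;> first | omega | norm_num
    · have := ih (by omega)
      push_cast [pow_succ] at *
      nlinarith [pow_pos (by norm_num : (0:ℝ) < 4) n]


lemma aux_ratio (d : ℕ) (hd : 3 ≤ d) :
    (2 * π ^ (((d:ℝ)+1)/2) / Real.Gamma (((d:ℝ)+1)/2)) /
      (2 * π ^ ((d:ℝ)/2) / Real.Gamma ((d:ℝ)/2))
      ≤ Real.sqrt (2 * π * ((d:ℝ)+1)) / (d:ℝ) := by
  set D := (d:ℝ) with hDdef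
  have hD3 : (3:ℝ) ≤ D := by rw [hDdef]; exact_mod_cast hd
  have hDpos : (0:ℝ) < D := by linarith
  have hG1 : 0 < Real.Gamma (D/2) := Real.Gamma_pos_of_pos (by linarith)
  have hG2 : 0 < Real.Gamma ((D+1)/2) := Real.Gamma_pos_of_pos (by linarith)
  have hsqpi : (0:ℝ) < Real.sqrt π := Real.sqrt_pos.mpr Real.pi_pos
  have hsq2 : (0:ℝ) < Real.sqrt ((D+1)/2) := Real.sqrt_pos.mpr (by linarith)
  have key : (D/2) * Real.Gamma (D/2) ≤ Real.Gamma ((D+1)/2) * Real.sqrt ((D+1)/2) := by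
    have h := aux_log_convex_gamma (D/2) (by linarith)
    rw [show D/2 + 1/2 = (D+1)/2 by ring, Real.Gamma_add_one (by positivity)] at h
    exact h
  have hsplit : π ^ ((D+1)/2) = π ^ (D/2) * Real.sqrt π := by
    rw [Real.sqrt_eq_rpow, ← Real.rpow_add Real.pi_pos]
    ring_nf
  have hp2 : (0:ℝ) < π ^ (D/2) := Real.rpow_pos_of_pos Real.pi_pos _
  have hL : (2 * π ^ ((D+1)/2) / Real.Gamma ((D+1)/2)) /
      (2 * π ^ (D/2) / Real.Gamma (D/2))
      = Real.sqrt π * Real.Gamma (D/2) / Real.Gamma ((D+1)/2) := by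
    rw [hsplit]; field_simp
  have hsq : (2 * Real.sqrt (π * ((D+1)/2)))^2 = 2*π*(D+1) := by
    rw [mul_pow, Real.sq_sqrt (by positivity)]; ring
  have hR : Real.sqrt (2 * π * (D+1)) = Real.sqrt π * (2 * Real.sqrt ((D+1)/2)) := by
    rw [← hsq, Real.sqrt_sq (by positivity), Real.sqrt_mul Real.pi_pos.le]
    ring
  rw [hL, hR, div_le_div_iff₀ hG2 hDpos]
  nlinarith [mul_le_mul_of_nonneg_left key hsqpi.le]

lemma aux_pow4 (d : ℕ) (hd : 3 ≤ d) : (2*π*((d:ℝ)+1)) ^ ((1:ℝ)/(d:ℝ)) ≤ 4 := by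
  have hDpos : (0:ℝ) < (d:ℝ) := by
    have : (0:ℕ) < d := by omega
    exact_mod_cast this
  have h7 : 2*π*((d:ℝ)+1) ≤ 4 ^ d := by
    refine le_trans ?_ (aux_seven d hd)
    have : π < 3.15 := Real.pi_lt_d2
    nlinarith
  calc (2*π*((d:ℝ)+1)) ^ ((1:ℝ)/(d:ℝ))
      ≤ ((4:ℝ) ^ d) ^ ((1:ℝ)/(d:ℝ)) :=
        Real.rpow_le_rpow (by positivity) h7 (by positivity)
    _ = 4 := by
        rw [← Real.rpow_natCast (4:ℝ) d, ← Real.rpow_mul (by norm_num),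
          mul_one_div, div_self (ne_of_gt hDpos), Real.rpow_one]

lemma aux_num (d : ℕ) (hd : 3 ≤ d) :
    (2*((d:ℝ)-2) * (2*π^(((d:ℝ)+1)/2)/Real.Gamma (((d:ℝ)+1)/2)) ^ ((2:ℝ)/(d:ℝ))) *
      ((2*π^((d:ℝ)/2)/Real.Gamma ((d:ℝ)/2)) / (d:ℝ)) ^ (((d:ℝ)-2)/(d:ℝ)) *
      ((2 * ((2:ℝ) ^ (-(d:ℝ)/((d:ℝ)-2)) *
        ((d:ℝ) * (2*π^((d:ℝ)/2)/Real.Gamma ((d:ℝ)/2))) ^ (-(2:ℝ)/((d:ℝ)-2))))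
          ^ (((d:ℝ)-2)/2)) ≤ 1/2 := by
  have hD3 : (3:ℝ) ≤ (d:ℝ) := by exact_mod_cast hd
  set D := (d:ℝ) with hDdef
  have hDpos : (0:ℝ) < D := by linarith
  have hD2 : (0:ℝ) < D - 2 := by linarith
  have hG1 : 0 < Real.Gamma (D/2) := Real.Gamma_pos_of_pos (by linarith)
  have hG2 : 0 < Real.Gamma ((D+1)/2) := Real.Gamma_pos_of_pos (by linarith)
  set σ : ℝ := 2*π^(D/2)/Real.Gamma (D/2) with hσdef
  set S' : ℝ := 2*π^((D+1)/2)/Real.Gamma ((D+1)/2) with hS'def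
  have hσ : 0 < σ := by
    rw [hσdef]; positivity
  have hS' : 0 < S' := by
    rw [hS'def]; positivity
  -- Step 1 : (2*K₁)^((D-2)/2) = (1/2) * (D*σ)⁻¹
  have step1 : (2 * ((2:ℝ) ^ (-D/(D-2)) * (D*σ) ^ (-(2:ℝ)/(D-2)))) ^ ((D-2)/2)
      = (1/2) * (D*σ)⁻¹ := by
    rw [Real.mul_rpow (by norm_num) (by positivity),
      Real.mul_rpow (by positivity) (by positivity),
      ← Real.rpow_mul (by norm_num : (0:ℝ) ≤ 2),
      ← Real.rpow_mul (by positivity : (0:ℝ) ≤ D*σ),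
      show -(2:ℝ)/(D-2) * ((D-2)/2) = -1 by field_simp,
      show -D/(D-2) * ((D-2)/2) = -(D/2) by field_simp,
      Real.rpow_neg_one, ← mul_assoc, ← Real.rpow_add (by norm_num : (0:ℝ) < 2),
      show (D-2)/2 + -(D/2) = -1 by ring, Real.rpow_neg_one]
    norm_num
  rw [step1]
  -- Step 2 : (σ/D)^((D-2)/D) = (σ/D) * (σ/D)^(-(2:ℝ)/D)
  have step2 : (σ/D) ^ ((D-2)/D) = (σ/D) * (σ/D) ^ (-(2:ℝ)/D) := by
    rw [show (D-2)/D = 1 + (-2/D) by field_simp; ring,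
      Real.rpow_add (by positivity), Real.rpow_one]
  rw [step2]
  -- Step 3 : S'^(2/D) * (σ/D)^(-(2:ℝ)/D) = (S'/σ*D)^(2/D)
  have step3 : S' ^ ((2:ℝ)/D) * (σ/D) ^ (-(2:ℝ)/D) = (S'/σ*D) ^ ((2:ℝ)/D) := by
    rw [show -(2:ℝ)/D = -((2:ℝ)/D) by ring, Real.rpow_neg (by positivity),
      ← Real.inv_rpow (by positivity),
      ← Real.mul_rpow (by positivity) (by positivity)]
    congr 1
    field_simp
  -- Step 4 : (S'/σ*D)^(2/D) ≤ 4
  have step4 : (S'/σ*D) ^ ((2:ℝ)/D) ≤ 4 := by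
    have hratio : S'/σ*D ≤ Real.sqrt (2*π*(D+1)) := by
      have h := aux_ratio d hd
      rw [← hDdef, ← hσdef, ← hS'def] at h
      calc S'/σ*D ≤ (Real.sqrt (2*π*(D+1))/D) * D :=
            mul_le_mul_of_nonneg_right h hDpos.le
        _ = Real.sqrt (2*π*(D+1)) := by field_simp
    calc (S'/σ*D) ^ ((2:ℝ)/D) ≤ (Real.sqrt (2*π*(D+1))) ^ ((2:ℝ)/D) :=
          Real.rpow_le_rpow (by positivity) hratio (by positivity)
      _ = (2*π*(D+1)) ^ ((1:ℝ)/D) := by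
          rw [Real.sqrt_eq_rpow, ← Real.rpow_mul (by positivity),
            show (1:ℝ)/2*(2/D) = 1/D by ring]
      _ ≤ 4 := aux_pow4 d hd
  -- Final arithmetic
  have hP : (0:ℝ) < (S'/σ*D) ^ ((2:ℝ)/D) := Real.rpow_pos_of_pos (by positivity) _
  have heq : 2*(D-2) * S' ^ ((2:ℝ)/D) * ((σ/D) * (σ/D) ^ (-(2:ℝ)/D)) * ((1/2) * (D*σ)⁻¹)
      = (D-2) * (S'/σ*D) ^ ((2:ℝ)/D) / D^2 := by
    rw [← step3]
    field_simp
  rw [heq]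
  rw [div_le_div_iff₀ (by positivity) (by norm_num)]
  nlinarith [mul_le_mul_of_nonneg_left step4 hD2.le, sq_nonneg (D-4)]

/-- Incompatibility of the first blow-up criterion with the smallness condition for
global existence: if `∫|x|² n₀ < K₁(d) M^{d/(d-2)}` with
`K₁(d) = 2^{-d/(d-2)} (d|𝕊^{d-1}|)^{-2/(d-2)}`, then
`‖n₀‖_{L^{d/2}} > 8/(d C_S(d)²)`, where `C_S(d)² = 4/(d(d-2)|𝕊^d|^{2/d})`,
`|𝕊^{d-1}| = 2π^{d/2}/Γ(d/2)` and `|𝕊^d| = 2π^{(d+1)/2}/Γ((d+1)/2)`. -/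
theorem blowup_incompatible_with_smallness (d : ℕ) (hd : 3 ≤ d)
    (n₀ : EuclideanSpace ℝ (Fin d) → ℝ)
    (h_nonneg : ∀ x, 0 ≤ n₀ x)
    (h_int : Integrable n₀)
    (h_mom : Integrable (fun x => ‖x‖ ^ 2 * n₀ x))
    (h_Lp : MemLp n₀ (ENNReal.ofReal ((d : ℝ) / 2)))
    (M : ℝ) (hM : M = ∫ x, n₀ x)
    (h_blowup : ∫ x, ‖x‖ ^ 2 * n₀ x
        < (2 : ℝ) ^ (-(d : ℝ) / ((d : ℝ) - 2)) *
          ((d : ℝ) * (2 * Real.pi ^ ((d : ℝ) / 2) / Real.Gamma ((d : ℝ) / 2)))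
            ^ (-(2 : ℝ) / ((d : ℝ) - 2)) *
          M ^ ((d : ℝ) / ((d : ℝ) - 2))) :
    (eLpNorm n₀ (ENNReal.ofReal ((d : ℝ) / 2)) volume).toReal
      > 8 / ((d : ℝ) * (4 / ((d : ℝ) * ((d : ℝ) - 2) *
          (2 * Real.pi ^ (((d : ℝ) + 1) / 2) / Real.Gamma (((d : ℝ) + 1) / 2))
            ^ ((2 : ℝ) / d)))) := by
  haveI : Nonempty (Fin d) := ⟨⟨0, by omega⟩⟩
  have hD3 : (3:ℝ) ≤ (d:ℝ) := by exact_mod_cast hd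
  have hDpos : (0:ℝ) < (d:ℝ) := by linarith
  have hD2 : (0:ℝ) < (d:ℝ) - 2 := by linarith
  have hG1 : 0 < Real.Gamma ((d:ℝ)/2) := Real.Gamma_pos_of_pos (by linarith)
  have hG2 : 0 < Real.Gamma (((d:ℝ)+1)/2) := Real.Gamma_pos_of_pos (by linarith)
  set σ : ℝ := 2*π^((d:ℝ)/2)/Real.Gamma ((d:ℝ)/2) with hσdef
  set S' : ℝ := 2*π^(((d:ℝ)+1)/2)/Real.Gamma (((d:ℝ)+1)/2) with hS'def
  have hσ : 0 < σ := by rw [hσdef]; positivity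
  have hS' : 0 < S' := by rw [hS'def]; positivity
  set K₁ : ℝ := (2:ℝ)^(-(d:ℝ)/((d:ℝ)-2)) * ((d:ℝ)*σ)^(-(2:ℝ)/((d:ℝ)-2)) with hK₁def
  have hK₁ : 0 < K₁ := by
    rw [hK₁def]
    have h1 : (0:ℝ) < (2:ℝ)^(-(d:ℝ)/((d:ℝ)-2)) := Real.rpow_pos_of_pos (by norm_num) _
    have h2 : (0:ℝ) < ((d:ℝ)*σ)^(-(2:ℝ)/((d:ℝ)-2)) := Real.rpow_pos_of_pos (by positivity) _
    positivity
  set I : ℝ := ∫ x, ‖x‖ ^ 2 * n₀ x with hIdef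
  have hI0 : 0 ≤ I := integral_nonneg fun x => mul_nonneg (by positivity) (h_nonneg x)
  have hM0 : 0 ≤ M := hM ▸ integral_nonneg h_nonneg
  have hMpos : 0 < M := by
    rcases eq_or_lt_of_le hM0 with h | h
    · exfalso
      rw [← h, Real.zero_rpow (by positivity : (d:ℝ)/((d:ℝ)-2) ≠ 0), mul_zero] at h_blowup
      linarith
    · exact h
  -- the target constant
  set Cst : ℝ := 2*((d:ℝ)-2)*S'^((2:ℝ)/(d:ℝ)) with hCstdef
  have hS2d : 0 < S' ^ ((2:ℝ)/(d:ℝ)) := Real.rpow_pos_of_pos hS' _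
  have hgoal_eq : 8 / ((d:ℝ) * (4 / ((d:ℝ)*((d:ℝ)-2)*S'^((2:ℝ)/(d:ℝ))))) = Cst := by
    rw [hCstdef]; field_simp; ring
  rw [show (8:ℝ) / ((d : ℝ) * (4 / ((d : ℝ) * ((d : ℝ) - 2) *
      S' ^ ((2 : ℝ) / d)))) = Cst from hgoal_eq]
  by_contra hcon
  push_neg at hcon
  -- choose the radius
  set R : ℝ := (2*K₁) ^ ((1:ℝ)/2) * M ^ ((1:ℝ)/((d:ℝ)-2)) with hRdef
  have hRpos : 0 < R := by
    rw [hRdef]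
    exact mul_pos (Real.rpow_pos_of_pos (by linarith) _) (Real.rpow_pos_of_pos hMpos _)
  set B : Set (EuclideanSpace ℝ (Fin d)) := Metric.ball 0 R with hBdef
  -- Hölder inequality on the ball
  have hpq : Real.HolderConjugate ((d:ℝ)/2) ((d:ℝ)/((d:ℝ)-2)) := by
    rw [Real.holderConjugate_iff_eq_conjExponent (by linarith)]
    field_simp
  have hvol_ne : volume B ≠ ⊤ := (measure_ball_lt_top).ne
  have hg_mem : MemLp (B.indicator fun _ => (1:ℝ))
      (ENNReal.ofReal ((d:ℝ)/((d:ℝ)-2))) volume :=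
    memLp_indicator_const _ measurableSet_ball 1 (Or.inr hvol_ne)
  have holder := MeasureTheory.integral_mul_le_Lp_mul_Lq_of_nonneg hpq
    (ae_of_all _ h_nonneg)
    (ae_of_all _ fun x => Set.indicator_nonneg (fun _ _ => zero_le_one) x)
    h_Lp hg_mem
  -- identify the three integrals in holder
  have hprod : (fun a => n₀ a * (B.indicator fun _ => (1:ℝ)) a) = B.indicator n₀ := by
    funext a
    by_cases h : a ∈ B <;> simp [Set.indicator, h]
  rw [hprod, integral_indicator measurableSet_ball] at holder
  have hJint : ∫ a, n₀ a ^ ((d:ℝ)/2) = ∫ a, ‖n₀ a‖ ^ ((d:ℝ)/2) := by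
    refine integral_congr_ae (ae_of_all _ fun a => ?_)
    show n₀ a ^ ((d:ℝ)/2) = ‖n₀ a‖ ^ ((d:ℝ)/2)
    rw [Real.norm_of_nonneg (h_nonneg a)]
  have hqint : ∫ a, (B.indicator fun _ => (1:ℝ)) a ^ ((d:ℝ)/((d:ℝ)-2))
      = (volume B).toReal := by
    have : (fun a => (B.indicator fun _ => (1:ℝ)) a ^ ((d:ℝ)/((d:ℝ)-2)))
        = B.indicator fun _ => (1:ℝ) := by
      funext a
      by_cases h : a ∈ B <;>
        simp [Set.indicator, h, Real.one_rpow,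
          Real.zero_rpow (by positivity : (d:ℝ)/((d:ℝ)-2) ≠ 0)]
    rw [this, integral_indicator_const (1:ℝ) measurableSet_ball, smul_eq_mul, mul_one]; rfl
  rw [hJint, hqint] at holder
  -- identify the Lp norm
  have hp_ne0 : ENNReal.ofReal ((d:ℝ)/2) ≠ 0 := by
    simp only [ne_eq, ENNReal.ofReal_eq_zero, not_le]
    linarith
  have hNform := h_Lp.eLpNorm_eq_integral_rpow_norm hp_ne0 ENNReal.ofReal_ne_top
  rw [ENNReal.toReal_ofReal (by linarith : (0:ℝ) ≤ (d:ℝ)/2)] at hNform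
  have hJ0 : 0 ≤ ∫ a, ‖n₀ a‖ ^ ((d:ℝ)/2) :=
    integral_nonneg fun a => Real.rpow_nonneg (norm_nonneg _) _
  have hNval : (eLpNorm n₀ (ENNReal.ofReal ((d:ℝ)/2)) volume).toReal
      = (∫ a, ‖n₀ a‖ ^ ((d:ℝ)/2)) ^ ((1:ℝ)/((d:ℝ)/2)) := by
    rw [hNform, ENNReal.toReal_ofReal (Real.rpow_nonneg hJ0 _), one_div]
  -- Hölder conclusion with eLpNorm
  have holder2 : ∫ x in B, n₀ x
      ≤ Cst * (volume B).toReal ^ ((1:ℝ)/((d:ℝ)/((d:ℝ)-2))) := by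
    refine le_trans holder ?_
    have hvolpow : (0:ℝ) ≤ (volume B).toReal ^ ((1:ℝ)/((d:ℝ)/((d:ℝ)-2))) :=
      Real.rpow_nonneg ENNReal.toReal_nonneg _
    have : (∫ a, ‖n₀ a‖ ^ ((d:ℝ)/2)) ^ ((1:ℝ)/((d:ℝ)/2)) ≤ Cst := by
      rw [← hNval]; exact hcon
    exact mul_le_mul_of_nonneg_right this hvolpow
  -- tail estimate
  have htail : ∫ x in Bᶜ, n₀ x ≤ I / R^2 := by
    have hmono : ∀ x ∈ Bᶜ, n₀ x ≤ ‖x‖^2 * n₀ x / R^2 := by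
      intro x hx
      have hxR : R ≤ ‖x‖ := by
        have := hx
        simp only [hBdef, Set.mem_compl_iff, Metric.mem_ball, dist_zero_right, not_lt] at this
        exact this
      have hx2 : R^2 ≤ ‖x‖^2 := by nlinarith [norm_nonneg x]
      rw [le_div_iff₀ (pow_pos hRpos 2)]
      nlinarith [h_nonneg x]
    calc ∫ x in Bᶜ, n₀ x ≤ ∫ x in Bᶜ, ‖x‖^2 * n₀ x / R^2 :=
          setIntegral_mono_on h_int.integrableOn
            ((h_mom.div_const (R^2)).integrableOn) measurableSet_ball.compl hmono
      _ ≤ ∫ x, ‖x‖^2 * n₀ x / R^2 :=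
          setIntegral_le_integral (h_mom.div_const (R^2))
            (ae_of_all _ fun x => div_nonneg
              (mul_nonneg (pow_nonneg (norm_nonneg x) 2) (h_nonneg x)) (sq_nonneg R))
      _ = I / R^2 := by rw [← integral_div]
  -- split the mass
  have hsplit : M = (∫ x in B, n₀ x) + ∫ x in Bᶜ, n₀ x := by
    rw [hM, ← integral_add_compl measurableSet_ball h_int]
  -- compute the volume term
  have hvol : (volume B).toReal ^ ((1:ℝ)/((d:ℝ)/((d:ℝ)-2)))
      = (σ/(d:ℝ)) ^ (((d:ℝ)-2)/(d:ℝ)) * ((2*K₁) ^ (((d:ℝ)-2)/2) * M) := by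
    have hsqpi : (Real.sqrt π)^(d:ℕ) = π^((d:ℝ)/2) := by
      rw [← Real.rpow_natCast (Real.sqrt π) d, Real.sqrt_eq_rpow,
        ← Real.rpow_mul Real.pi_pos.le, show (1:ℝ)/2*(d:ℝ) = (d:ℝ)/2 by ring]
    have hW : (Real.sqrt π)^(d:ℕ) / Real.Gamma ((d:ℝ)/2 + 1) = σ/(d:ℝ) := by
      rw [hsqpi, Real.Gamma_add_one (by positivity : (d:ℝ)/2 ≠ 0), hσdef]
      field_simp
    have htr : (volume B).toReal = R^(d:ℕ) * (σ/(d:ℝ)) := by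
      rw [hBdef, EuclideanSpace.volume_ball]
      simp only [Fintype.card_fin]
      rw [ENNReal.toReal_mul, ENNReal.toReal_pow, ENNReal.toReal_ofReal hRpos.le,
        ENNReal.toReal_ofReal (by positivity), hW]
    rw [htr, show (1:ℝ)/((d:ℝ)/((d:ℝ)-2)) = ((d:ℝ)-2)/(d:ℝ) by field_simp]
    rw [Real.mul_rpow (pow_nonneg hRpos.le d) (div_nonneg hσ.le hDpos.le)]
    have hRd : (R^(d:ℕ)) ^ (((d:ℝ)-2)/(d:ℝ)) = (2*K₁) ^ (((d:ℝ)-2)/2) * M := by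
      rw [← Real.rpow_natCast R d, ← Real.rpow_mul hRpos.le,
        show (d:ℝ) * (((d:ℝ)-2)/(d:ℝ)) = (d:ℝ)-2 by field_simp]
      rw [hRdef, Real.mul_rpow (Real.rpow_nonneg (by linarith) _)
          (Real.rpow_nonneg hMpos.le _),
        ← Real.rpow_mul (by linarith : (0:ℝ) ≤ 2*K₁),
        ← Real.rpow_mul hMpos.le,
        show (1:ℝ)/2 * ((d:ℝ)-2) = ((d:ℝ)-2)/2 by ring,
        show (1:ℝ)/((d:ℝ)-2) * ((d:ℝ)-2) = 1 by field_simp,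
        Real.rpow_one]
    rw [hRd]
    ring
  -- the key numeric bound
  have hnum := aux_num d hd
  rw [← hσdef, ← hS'def, ← hK₁def, ← hCstdef] at hnum
  have hball_le : Cst * (volume B).toReal ^ ((1:ℝ)/((d:ℝ)/((d:ℝ)-2))) ≤ M/2 := by
    rw [hvol]
    calc Cst * ((σ/(d:ℝ)) ^ (((d:ℝ)-2)/(d:ℝ)) * ((2*K₁) ^ (((d:ℝ)-2)/2) * M))
        = (Cst * (σ/(d:ℝ)) ^ (((d:ℝ)-2)/(d:ℝ)) * (2*K₁) ^ (((d:ℝ)-2)/2)) * M := by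
          ring
      _ ≤ (1/2) * M := mul_le_mul_of_nonneg_right hnum hMpos.le
      _ = M/2 := by ring
  -- the tail is strictly less than M/2
  have hR2 : R^2 = 2*K₁ * M ^ ((2:ℝ)/((d:ℝ)-2)) := by
    rw [hRdef, mul_pow, ← Real.rpow_natCast ((2*K₁) ^ ((1:ℝ)/2)) 2,
      ← Real.rpow_natCast (M ^ ((1:ℝ)/((d:ℝ)-2))) 2,
      ← Real.rpow_mul (by linarith : (0:ℝ) ≤ 2*K₁), ← Real.rpow_mul hMpos.le]
    push_cast
    rw [show (1:ℝ)/2*2 = 1 by norm_num, show (1:ℝ)/((d:ℝ)-2)*2 = 2/((d:ℝ)-2) by ring,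
      Real.rpow_one]
  have htail_lt : I / R^2 < M/2 := by
    have hR2pos : (0:ℝ) < R^2 := pow_pos hRpos 2
    have hfrac : K₁ * M ^ ((d:ℝ)/((d:ℝ)-2)) / R^2 = M/2 := by
      rw [hR2, show (d:ℝ)/((d:ℝ)-2) = 2/((d:ℝ)-2) + 1 by field_simp; ring,
        Real.rpow_add hMpos, Real.rpow_one]
      have hMr : (0:ℝ) < M ^ ((2:ℝ)/((d:ℝ)-2)) := Real.rpow_pos_of_pos hMpos _
      field_simp
    rw [← hfrac]
    exact (div_lt_div_iff_of_pos_right hR2pos).mpr h_blowup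
  have hfinal : M < M := by
    calc M = (∫ x in B, n₀ x) + ∫ x in Bᶜ, n₀ x := hsplit
      _ ≤ Cst * (volume B).toReal ^ ((1:ℝ)/((d:ℝ)/((d:ℝ)-2))) + I / R^2 :=
          add_le_add (le_trans holder2 (le_refl _)) htail
      _ < M/2 + M/2 := by
          exact add_lt_add_of_le_of_lt hball_le htail_lt
      _ = M := by ring
  exact lt_irrefl M hfinal
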